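/- arXiv:1303.3728 — 13 statements merged into one kernel-verified Lean document; each statement's English description precedes it below -/
import Mathlib

section
/- Let T be the formal power series over ℚ satisfying T = 1 + z·T^2 (the generating function of binary trees). Then for all integers p ≥ 1 and k ≥ 0, the coefficient of z^k in T^p equals p/(2k+p) · C(2k+p, k). -/
open PowerSeries

lemma catalan_aux (p j : ℕ) :
    ((p:ℚ)+1)/(2*(j+1)+(p+1)) * (Nat.choose (2*(j+1)+(p+1)) (j+1) : ℚ) =
    (p:ℚ)/(2*(j+1)+p) * (Nat.choose (2*(j+1)+p) (j+1) : ℚ) +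
      ((p:ℚ)+2)/(2*j+(p+2)) * (Nat.choose (2*j+(p+2)) j : ℚ) := by
  have e1 : 2*(j+1)+(p+1) = 2*j+p+3 := by ring
  have e2 : 2*(j+1)+p = 2*j+p+2 := by ring
  have e3 : 2*j+(p+2) = 2*j+p+2 := by ring
  rw [e1, e2, e3]
  have h1 : ((2*j+p+3 : ℕ) : ℚ) * (Nat.choose (2*j+p+2) j : ℚ)
      = (Nat.choose (2*j+p+3) (j+1) : ℚ) * ((j:ℚ)+1) := by
    exact_mod_cast congrArg (Nat.cast (R := ℚ)) (Nat.add_one_mul_choose_eq (2*j+p+2) j)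
  have h2 : (Nat.choose (2*j+p+3) (j+1) : ℚ)
      = (Nat.choose (2*j+p+2) j : ℚ) + (Nat.choose (2*j+p+2) (j+1) : ℚ) := by
    exact_mod_cast congrArg (Nat.cast (R := ℚ)) (Nat.choose_succ_succ (2*j+p+2) j)
  have hn1 : ((2*j+p+3 : ℕ) : ℚ) ≠ 0 := by positivity
  have hn2 : ((2*j+p+2 : ℕ) : ℚ) ≠ 0 := by positivity
  push_cast at h1 h2 hn1 hn2 ⊢
  field_simp
  linear_combination ((p:ℚ)*(2*j+p+3)*(2*j+p+2))*h2 - 2*(2*(j:ℚ)+p+2)*h1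

theorem coeff_pow_binary_tree_series (T : PowerSeries ℚ)
    (hT : T = 1 + PowerSeries.X * T ^ 2) :
    ∀ p k : ℕ, 1 ≤ p →
      PowerSeries.coeff k (T ^ p) =
        (p : ℚ) / (2 * k + p) * (Nat.choose (2 * k + p) k : ℚ) := by
  have hc : constantCoeff T = 1 := by
    conv_lhs => rw [hT]
    simp
  have hrec : ∀ p k : ℕ, coeff (k+1) (T^(p+1)) =
      coeff (k+1) (T^p) + coeff k (T^(p+2)) := by
    intro p k
    have : T^(p+1) = T^p + X * T^(p+2) := by
      calc T^(p+1) = T^p * (1 + X * T^2) := by rw [← hT]; ring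
        _ = T^p + X * T^(p+2) := by ring
    rw [this, map_add, PowerSeries.coeff_succ_X_mul]
  suffices key : ∀ k p : ℕ, 1 ≤ p →
      coeff k (T ^ p) = (p : ℚ) / (2 * k + p) * (Nat.choose (2 * k + p) k : ℚ) by
    intro p k hp; exact key k p hp
  intro k
  induction k using Nat.strong_induction_on with
  | _ k ih =>
    match k with
    | 0 =>
      intro p hp
      have hp0 : (p : ℚ) ≠ 0 := Nat.cast_ne_zero.mpr (by omega)
      simp [PowerSeries.coeff_zero_eq_constantCoeff, map_pow, hc, hp0,
        div_self, Nat.choose_zero_right]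
    | j + 1 =>
      have hall : ∀ p : ℕ, coeff (j+1) (T ^ p) =
          (p : ℚ) / (2 * (j+1) + p) * (Nat.choose (2 * (j+1) + p) (j+1) : ℚ) := by
        intro p
        induction p with
        | zero => simp
        | succ p ihp =>
          rw [hrec p j, ihp, ih j (Nat.lt_succ_self j) (p+2) (by omega)]
          push_cast
          exact (catalan_aux p j).symm
      intro p _
      rw [hall p]
      push_cast
      ring
end

section
/- Let T be the formal power series over ℚ satisfying T = 1 + w·T^3 (the generating function of ternary trees). Then for all integers n ≥ 0, the coefficient of w^n in T equals C(3n, n)/(2n+1). -/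
open PowerSeries

theorem coeff_ternary_tree_series (T : PowerSeries ℚ)
    (hT : T = 1 + PowerSeries.X * T ^ 3) :
    ∀ n : ℕ,
      PowerSeries.coeff n T = (Nat.choose (3 * n) n : ℚ) / (2 * n + 1) := by
  set D := PowerSeries.derivative ℚ with hD
  set T1 := D T with hT1
  set T2 := D T1 with hT2
  have h1 : (X : ℚ⟦X⟧) * T ^ 3 = T - 1 := by linear_combination -hT
  have hdX : D (X : ℚ⟦X⟧) = 1 := derivative_X
  have hd2 : D (2 : ℚ⟦X⟧) = 0 := by
    rw [show (2:ℚ⟦X⟧) = ((2:ℕ):ℚ⟦X⟧) by norm_cast]; exact Derivation.map_natCast D 2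
  have hd3 : D (3 : ℚ⟦X⟧) = 0 := by
    rw [show (3:ℚ⟦X⟧) = ((3:ℕ):ℚ⟦X⟧) by norm_cast]; exact Derivation.map_natCast D 3
  have hpow : D (T ^ 3) = 3 * T ^ 2 * T1 := by
    rw [hT1, hD, show T ^ 3 = T * T * T by ring, Derivation.leibniz, Derivation.leibniz]
    simp only [smul_eq_mul]; ring
  have h2 : T1 = T ^ 3 + 3 * X * T ^ 2 * T1 := by
    have := congrArg D h1
    rw [Derivation.leibniz, hdX, hpow] at this
    simp only [smul_eq_mul, map_sub, Derivation.map_one_eq_zero] at this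
    linear_combination -this
  have h3 : (3 - 2 * T) * (X * T1) = T ^ 2 - T := by
    linear_combination (X * T) * h2 + (3 * X * T1 + T) * h1
  have h4 : (3 - 2 * T) * (T1 + X * T2) - 2 * X * T1 ^ 2 = 2 * T * T1 - T1 := by
    have := congrArg D h3
    rw [Derivation.leibniz, Derivation.leibniz] at this
    simp only [smul_eq_mul, map_sub, hdX, hd3] at this
    rw [show D (T^2) = 2 * T * T1 by
          rw [hT1, hD, sq, Derivation.leibniz]; simp only [smul_eq_mul]; ring] at this
    rw [show D ((2:ℚ⟦X⟧) * T) = 2 * T1 by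
          rw [Derivation.leibniz]; simp only [smul_eq_mul, hd2]; ring] at this
    linear_combination this
  have hX : (X : ℚ⟦X⟧) ≠ 0 := X_ne_zero
  have h5 : X * (X^2 * (3 - 2*T)^3 * T2 + 6 * T * (T-1)^2 * (T-2)) = 0 := by
    linear_combination (X^2 * (3-2*T)^2) * h4 +
      (X * (2*((3-2*T)*(X*T1) - (T^2-T)) + 4*(T^2-T) + (2*T-1)*(3-2*T) - (3-2*T)^2)) * h3
  have h6 : X^2 * (3 - 2*T)^3 * T2 = -(6 * T * (T-1)^2 * (T-2)) := by
    rcases mul_eq_zero.mp h5 with h | h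
    · exact absurd h hX
    · linear_combination h
  have hE : X * ((3-2*T)^3 * (T^3 * ((4*X - 27*X^2) * T2 + (6 - 54*X) * T1 - 6*T))) = 0 := by
    linear_combination (T^3 * (4 - 27*X)) * h6 + (T^3 * (6 - 54*X) * (3-2*T)^2) * h3 +
      (162*T*(T-1)^2*(T-2) - 54*(3-2*T)^2*(T^2-T) - 6*T*(3-2*T)^3) * h1
  have hc0 : constantCoeff T = 1 := by
    rw [hT]; simp
  have hTne : T ≠ 0 := by
    intro h; rw [h] at hc0; simp at hc0
  have hSne : (3 - 2*T : ℚ⟦X⟧) ≠ 0 := by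
    intro h
    have h' := congrArg (constantCoeff) h
    rw [map_sub, map_mul, hc0] at h'
    simp only [map_ofNat, map_zero] at h'
    norm_num at h'
  have hE2 : (4*X - 27*X^2) * T2 + (6 - 54*X) * T1 - 6*T = 0 := by
    rcases mul_eq_zero.mp hE with h | h
    · exact absurd h hX
    rcases mul_eq_zero.mp h with h | h
    · exact absurd h (pow_ne_zero 3 hSne)
    rcases mul_eq_zero.mp h with h | h
    · exact absurd h (pow_ne_zero 3 hTne)
    · exact h
  have c4 : (C 4 : ℚ⟦X⟧) = 4 := map_ofNat (C) 4
  have c6 : (C 6 : ℚ⟦X⟧) = 6 := map_ofNat (C) 6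
  have c27 : (C 27 : ℚ⟦X⟧) = 27 := map_ofNat (C) 27
  have c54 : (C 54 : ℚ⟦X⟧) = 54 := map_ofNat (C) 54
  have hE3 : C 4 * (X*T2) + C 6 * T1
      = C 27 * (X*(X*T2)) + C 54 * (X*T1) + C 6 * T := by
    rw [c4, c6, c27, c54]; linear_combination hE2
  have cT1 : ∀ n : ℕ, coeff n T1 = coeff (n+1) T * (n+1) := by
    intro n; rw [hT1, hD]; exact coeff_derivative T n
  have cT2 : ∀ n : ℕ, coeff n T2 = coeff (n+1) T1 * (n+1) := by
    intro n; rw [hT2, hD]; exact coeff_derivative T1 n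
  have hco : ∀ n : ℕ, 4 * coeff n (X*T2) + 6 * coeff n T1
      = 27 * coeff n (X*(X*T2)) + 54 * coeff n (X*T1) + 6 * coeff n T := by
    intro n
    have := congrArg (coeff n) hE3
    simpa only [map_add, coeff_C_mul] using this
  have hrec : ∀ n : ℕ, 2*((n:ℚ)+1)*(2*n+3) * coeff (n+1) T
      = 3*(3*(n:ℚ)+1)*(3*n+2) * coeff n T := by
    intro n
    match n with
    | 0 =>
      have h := hco 0
      rw [coeff_zero_X_mul, coeff_zero_X_mul, coeff_zero_X_mul] at h
      simp only [cT1] at h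
      push_cast at h ⊢
      norm_num at h ⊢
      linear_combination h
    | 1 =>
      have h := hco 1
      have e1 : coeff 1 (X*T2) = coeff 0 T2 := coeff_succ_X_mul 0 T2
      have e2 : coeff 1 (X*(X*T2)) = coeff 0 (X*T2) := coeff_succ_X_mul 0 (X*T2)
      have e3 : coeff 1 (X*T1) = coeff 0 T1 := coeff_succ_X_mul 0 T1
      rw [e1, e2, coeff_zero_X_mul, e3] at h
      simp only [cT2, cT1] at h
      push_cast at h ⊢
      norm_num at h ⊢
      linear_combination h
    | (m+2) =>
      have h := hco (m+2)
      have e1 : coeff (m+2) (X*T2) = coeff (m+1) T2 := coeff_succ_X_mul (m+1) T2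
      have e2 : coeff (m+2) (X*(X*T2)) = coeff (m+1) (X*T2) :=
        coeff_succ_X_mul (m+1) (X*T2)
      have e2' : coeff (m+1) (X*T2) = coeff m T2 := coeff_succ_X_mul m T2
      have e3 : coeff (m+2) (X*T1) = coeff (m+1) T1 := coeff_succ_X_mul (m+1) T1
      rw [e1, e2, e2', e3] at h
      simp only [cT2, cT1] at h
      simp only [show m+1+1 = m+2 from rfl, show m+2+1 = m+3 from rfl] at h ⊢
      push_cast at h ⊢
      linear_combination h
  have key : ∀ n : ℕ, 2*((n:ℚ)+1)*(2*n+1) * (Nat.choose (3*(n+1)) (n+1) : ℚ)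
      = 3*(3*(n:ℚ)+1)*(3*n+2) * (Nat.choose (3*n) n : ℚ) := by
    intro n
    rw [Nat.cast_choose ℚ (by omega : n+1 ≤ 3*(n+1)), Nat.cast_choose ℚ (by omega : n ≤ 3*n)]
    rw [show 3*(n+1) - (n+1) = 2*n+2 from by omega, show 3*n - n = 2*n from by omega]
    rw [show 3*(n+1) = 3*n+1+1+1 from by ring, show 2*n+2 = 2*n+1+1 from by ring]
    simp only [Nat.factorial_succ]
    have n1 : ((Nat.factorial n : ℕ) : ℚ) ≠ 0 := by
      exact_mod_cast Nat.factorial_ne_zero n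
    have n2 : ((Nat.factorial (2*n) : ℕ) : ℚ) ≠ 0 := by
      exact_mod_cast Nat.factorial_ne_zero (2*n)
    have n3 : ((n:ℚ)+1) ≠ 0 := by positivity
    have n4 : (2*(n:ℚ)+1) ≠ 0 := by positivity
    push_cast
    field_simp
    ring
  intro n
  induction n with
  | zero =>
    have h0 : coeff 0 T = 1 := by rw [hT]; simp
    rw [h0]; norm_num
  | succ n ih =>
    have e := hrec n
    have ih' : coeff n T * (2*(n:ℚ)+1) = (Nat.choose (3*n) n : ℚ) := by
      rw [ih, div_mul_cancel₀ _ (by positivity : (2*(n:ℚ)+1) ≠ 0)]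
    have h23 : (2*((n+1:ℕ):ℚ)+1) ≠ 0 := by positivity
    rw [eq_div_iff h23]
    have hmul : (2*((n:ℚ)+1)*(2*(n:ℚ)+1)) ≠ 0 := by positivity
    apply mul_left_cancel₀ hmul
    push_cast
    linear_combination (2*(n:ℚ)+1) * e + (3*(3*(n:ℚ)+1)*(3*(n:ℚ)+2)) * ih' - key n
end

section
/- Define, for integers m ≥ k ≥ 0, A(m,k) = (2k+1)/(2m+1) · C(2m+1, m-k), and for integers n ≥ m ≥ 0, B(n,m) = (-1)^{n+m} · C(n+m, 2m). Then for all integers n ≥ p ≥ 0, the sum over k from p to n of A(n,k)·B(k,p) equals 1 if n = p and 0 otherwise. (That is, the lower-triangular matrices A and B are mutually inverse.) -/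
/-- `A m k = (2k+1)/(2m+1) * C(2m+1, m-k)` -/
def matA (m k : ℕ) : ℚ :=
  (2 * k + 1 : ℚ) / (2 * m + 1) * (Nat.choose (2 * m + 1) (m - k) : ℚ)

/-- `B n m = (-1)^(n+m) * C(n+m, 2m)` -/
def matB (n m : ℕ) : ℚ :=
  (-1 : ℚ) ^ (n + m) * (Nat.choose (n + m) (2 * m) : ℚ)

/-- Telescoping certificate for the sum `∑ (n-p)·(2k+1)·(-1)^(k+p)·C(2n+1,n+k+1)·C(k+p,2p)`. -/
def gfun (n p k : ℕ) : ℚ :=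
  (-1 : ℚ) ^ (k + p + 1) * ((k : ℚ) - p) * ((k : ℚ) + n + 1) *
    (Nat.choose (2 * n + 1) (n + k + 1) : ℚ) * (Nat.choose (k + p) (2 * p) : ℚ)

lemma gfun_step (n p k : ℕ) (hp : p ≤ k) (hk : k ≤ n) :
    gfun n p (k + 1) - gfun n p k =
      ((n : ℚ) - p) * (2 * k + 1) * (-1) ^ (k + p) *
        (Nat.choose (2 * n + 1) (n + k + 1) : ℚ) * (Nat.choose (k + p) (2 * p) : ℚ) := by
  have hpk : (p : ℚ) ≤ k := by exact_mod_cast hp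
  have hkn : (k : ℚ) ≤ n := by exact_mod_cast hk
  -- absorption identity for the first binomial
  have h1n : (2 * n + 1).choose (n + k + 2) * (n + k + 2) =
      (2 * n + 1).choose (n + k + 1) * (n - k) := by
    have := Nat.choose_succ_right_eq (2 * n + 1) (n + k + 1)
    have e : 2 * n + 1 - (n + k + 1) = n - k := by omega
    simpa [e] using this
  have h1 : ((2 * n + 1).choose (n + k + 2) : ℚ) * ((n : ℚ) + k + 2) =
      ((2 * n + 1).choose (n + k + 1) : ℚ) * ((n : ℚ) - k) := by
    have := congrArg (fun m : ℕ => (m : ℚ)) h1n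
    push_cast [Nat.cast_sub hk] at this
    linarith [this]
  -- absorption identity for the second binomial
  have h2n : (k + p).choose (2 * p) * (k + p + 1) =
      (k + p + 1).choose (2 * p) * (k + 1 - p) := by
    have := Nat.choose_mul_succ_eq (k + p) (2 * p)
    have e : k + p + 1 - 2 * p = k + 1 - p := by omega
    simpa [e] using this
  have h2 : ((k + p).choose (2 * p) : ℚ) * ((k : ℚ) + p + 1) =
      ((k + p + 1).choose (2 * p) : ℚ) * ((k : ℚ) + 1 - p) := by
    have := congrArg (fun m : ℕ => (m : ℚ)) h2n
    have hp' : p ≤ k + 1 := by omega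
    push_cast [Nat.cast_sub hp'] at this
    linarith [this]
  have hd1 : ((n : ℚ) + k + 2) ≠ 0 := by positivity
  have hd2 : ((k : ℚ) + 1 - p) ≠ 0 := by
    intro h; nlinarith
  have e1 : ((2 * n + 1).choose (n + k + 2) : ℚ) =
      ((2 * n + 1).choose (n + k + 1) : ℚ) * ((n : ℚ) - k) / ((n : ℚ) + k + 2) := by
    field_simp
    linarith [h1]
  have e2 : ((k + p + 1).choose (2 * p) : ℚ) =
      ((k + p).choose (2 * p) : ℚ) * ((k : ℚ) + p + 1) / ((k : ℚ) + 1 - p) := by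
    field_simp
    linarith [h2]
  unfold gfun
  have hidx1 : n + (k + 1) + 1 = n + k + 2 := by ring
  have hidx2 : k + 1 + p = k + p + 1 := by ring
  rw [hidx1, hidx2, e1, e2]
  push_cast
  field_simp
  ring

theorem matA_matB_inverse :
    ∀ n p : ℕ, p ≤ n →
      (∑ k ∈ Finset.Icc p n, matA n k * matB k p) =
        if n = p then 1 else 0 := by
  intro n p hpn
  rcases eq_or_lt_of_le hpn with heq | hlt
  · subst heq
    simp [matA, matB, Finset.Icc_self, Nat.choose_self, two_mul]
    have h : (2 * (p : ℚ) + 1) ≠ 0 := by positivity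
    field_simp
    exact (by positivity : (p : ℚ) * (1 + 1) + 1 ≠ 0)
  · -- p < n
    rw [if_neg (by omega)]
    have h2n1 : ((2 * (n : ℚ)) + 1) ≠ 0 := by positivity
    have hnp : ((n : ℚ) - p) ≠ 0 := by
      have : (p : ℚ) < n := by exact_mod_cast hlt
      intro h; linarith
    -- rewrite each term
    have key : ∀ k ∈ Finset.Icc p n,
        ((n : ℚ) - p) * ((2 * n : ℚ) + 1) * (matA n k * matB k p) =
          gfun n p (k + 1) - gfun n p k := by
      intro k hk
      rw [Finset.mem_Icc] at hk
      obtain ⟨hpk, hkn⟩ := hk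
      rw [gfun_step n p k hpk hkn]
      unfold matA matB
      have hsym : (2 * n + 1).choose (n - k) = (2 * n + 1).choose (n + k + 1) := by
        have h1 : n - k = 2 * n + 1 - (n + k + 1) := by omega
        rw [h1, Nat.choose_symm (by omega)]
      rw [hsym]
      field_simp
    have tele : ∑ k ∈ Finset.Icc p n,
        (((n : ℚ) - p) * ((2 * n : ℚ) + 1) * (matA n k * matB k p)) =
          gfun n p (n + 1) - gfun n p p := by
      rw [Finset.sum_congr rfl key]
      rw [← Finset.Ico_add_one_right_eq_Icc, Finset.sum_Ico_eq_sum_range]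
      have h : ∑ i ∈ Finset.range (n + 1 - p), (gfun n p (p + i + 1) - gfun n p (p + i)) =
          gfun n p (p + (n + 1 - p)) - gfun n p (p + 0) := by
        simpa [Nat.add_assoc] using
          Finset.sum_range_sub (fun i => gfun n p (p + i)) (n + 1 - p)
      rw [h, show p + (n + 1 - p) = n + 1 by omega]
      norm_num
    have hgp : gfun n p p = 0 := by
      unfold gfun; simp
    have hgn : gfun n p (n + 1) = 0 := by
      unfold gfun
      have : (2 * n + 1).choose (n + (n + 1) + 1) = 0 :=
        Nat.choose_eq_zero_of_lt (by omega)
      rw [this]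
      simp
    rw [hgp, hgn, sub_zero] at tele
    rw [← Finset.mul_sum] at tele
    have := mul_eq_zero.mp tele
    rcases this with h | h
    · exact absurd h (mul_ne_zero hnp h2n1)
    · exact h
end

section
/- Let A(m,k) = (2k+1)/(2m+1) · C(2m+1, m-k) and B(k,ℓ) = (-1)^{k+ℓ} C(k+ℓ, 2ℓ). Then for all integers m, b, ℓ with m ≥ b ≥ ℓ+1 ≥ 1 and m > ℓ: the sum over k from ℓ to b-1 of A(m,k)·B(k,ℓ) equals (-1)^{b-ℓ-1} · (b-ℓ)/(m-ℓ) · C(2m, m-b) · C(b+ℓ, 2ℓ). -/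
theorem hypergeometric_identity_one :
    ∀ m b ℓ : ℕ, b ≤ m → ℓ + 1 ≤ b → ℓ < m →
      (∑ k ∈ Finset.Icc ℓ (b - 1), matA m k * matB k ℓ) =
        (-1 : ℚ) ^ (b - ℓ - 1) * ((b : ℚ) - ℓ) / ((m : ℚ) - ℓ) *
          (Nat.choose (2 * m) (m - b) : ℚ) * (Nat.choose (b + ℓ) (2 * ℓ) : ℚ) := by
  intro m b ℓ hbm hlb hlm
  have hml : ((m : ℚ) - ℓ) ≠ 0 := by
    have : (ℓ : ℚ) < m := by exact_mod_cast hlm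
    linarith
  have h2m1 : ((2 * m : ℚ) + 1) ≠ 0 := by positivity
  induction b, hlb using Nat.le_induction with
  | base =>
    simp only [Nat.add_sub_cancel, Finset.Icc_self, Finset.sum_singleton]
    have h1 : m - ℓ - 1 + 1 = m - ℓ := by omega
    have h := Nat.add_one_mul_choose_eq (2 * m) (m - ℓ - 1)
    simp only [Nat.succ_eq_add_one, h1] at h
    have hX : (Nat.choose (2 * m + 1) (m - ℓ) : ℚ) =
        (2 * (m : ℚ) + 1) * (Nat.choose (2 * m) (m - ℓ - 1) : ℚ) / ((m : ℚ) - ℓ) := by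
      rw [eq_div_iff hml]
      have := congrArg (Nat.cast : ℕ → ℚ) h
      push_cast [Nat.cast_sub hlm.le] at this
      linear_combination -this
    have hB : matB ℓ ℓ = 1 := by
      simp [matB, ← two_mul, Nat.choose_self]
    have hch : Nat.choose (ℓ + 1 + ℓ) (2 * ℓ) = 2 * ℓ + 1 := by
      have e : ℓ + 1 + ℓ = 2 * ℓ + 1 := by omega
      have h2 := Nat.choose_symm (n := 2 * ℓ + 1) (k := 1) (by omega)
      simp only [Nat.choose_one_right] at h2
      rw [e]
      simpa using h2
    have hsub : m - (ℓ + 1) = m - ℓ - 1 := by omega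
    have he : ℓ + 1 - ℓ - 1 = 0 := by omega
    rw [hB, hch, hsub, he, pow_zero, matA, hX]
    push_cast
    field_simp
    ring
  | succ b hb ih =>
    have hbm' : b ≤ m := by omega
    have hblt : b < m := by omega
    have ih' := ih hbm'
    have hup : (b + 1) - 1 = b := by omega
    have hb1 : b - 1 + 1 = b := by omega
    have hsplit : (∑ k ∈ Finset.Icc ℓ b, matA m k * matB k ℓ) =
        (∑ k ∈ Finset.Icc ℓ (b - 1), matA m k * matB k ℓ) + matA m b * matB b ℓ := by
      have h := Finset.sum_Icc_succ_top (f := fun k => matA m k * matB k ℓ)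
        (a := ℓ) (b := b - 1) (by omega)
      rw [hb1] at h
      exact h
    rw [hup, hsplit, ih']
    have he1 : b + 1 - ℓ - 1 = (b - ℓ - 1) + 1 := by omega
    have he2 : b + ℓ = (b - ℓ - 1) + (2 * ℓ + 1) := by omega
    have hi1 : m - (b + 1) = m - b - 1 := by omega
    have hi2 : b + 1 + ℓ = b + ℓ + 1 := by omega
    have hmb : ((m : ℚ) - b) ≠ 0 := by
      have : (b : ℚ) < m := by exact_mod_cast hblt
      linarith
    have hbl : ((b : ℚ) + 1 - ℓ) ≠ 0 := by
      have : (ℓ : ℚ) + 1 ≤ b := by exact_mod_cast hb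
      linarith
    -- the sign of matB b ℓ
    have hs : (-1 : ℚ) ^ (b + ℓ) = -(-1 : ℚ) ^ (b - ℓ - 1) := by
      rw [he2, pow_add, pow_succ, pow_mul]
      norm_num
    -- C(2m+1, m-b) = C(2m, m-b-1) + C(2m, m-b)
    have hc1 : (Nat.choose (2 * m + 1) (m - b) : ℚ) =
        (Nat.choose (2 * m) (m - b - 1) : ℚ) + (Nat.choose (2 * m) (m - b) : ℚ) := by
      have h1 : m - b = (m - b - 1) + 1 := by omega
      rw [h1, Nat.choose_succ_succ]
      push_cast [Nat.succ_eq_add_one]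
      ring
    -- C(2m, m-b) = (m+b+1) * C(2m, m-b-1) / (m-b)
    have hc2 : (Nat.choose (2 * m) (m - b) : ℚ) =
        ((m : ℚ) + b + 1) * (Nat.choose (2 * m) (m - b - 1) : ℚ) / ((m : ℚ) - b) := by
      rw [eq_div_iff hmb]
      have h := Nat.choose_succ_right_eq (2 * m) (m - b - 1)
      have h1 : m - b - 1 + 1 = m - b := by omega
      have e : 2 * m - (m - b - 1) = m + b + 1 := by omega
      rw [h1, e] at h
      have := congrArg (Nat.cast : ℕ → ℚ) h
      push_cast [Nat.cast_sub hblt.le] at this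
      linear_combination this
    -- C(b+ℓ+1, 2ℓ) = (b+ℓ+1) * C(b+ℓ, 2ℓ) / (b+1-ℓ)
    have hc3 : (Nat.choose (b + ℓ + 1) (2 * ℓ) : ℚ) =
        ((b : ℚ) + ℓ + 1) * (Nat.choose (b + ℓ) (2 * ℓ) : ℚ) / ((b : ℚ) + 1 - ℓ) := by
      rw [eq_div_iff hbl]
      have h := Nat.choose_succ_right_eq (b + ℓ + 1) (2 * ℓ)
      have e : b + ℓ + 1 - 2 * ℓ = b + 1 - ℓ := by omega
      rw [e] at h
      have h2 := Nat.add_one_mul_choose_eq (b + ℓ) (2 * ℓ)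
      have h3 : (b + ℓ + 1) * Nat.choose (b + ℓ) (2 * ℓ) =
          Nat.choose (b + ℓ + 1) (2 * ℓ) * (b + 1 - ℓ) := h2.trans h
      have := congrArg (Nat.cast : ℕ → ℚ) h3
      push_cast [Nat.cast_sub (show ℓ ≤ b + 1 by omega)] at this
      linear_combination -this
    rw [he1, hi1, hi2, matA, matB, hs, hc1, hc2, hc3, pow_succ]
    push_cast
    field_simp
    ring
end

section
/- Let A(m,k) = (2k+1)/(2m+1) · C(2m+1, m-k). Then for all integers m ≥ b ≥ 0 and j ≥ b+1: the sum over k from b to m of A(m,k) · C(2j-1, j+k) equals (b+j)/(m+j) · C(2m, m-b) · C(2j-1, j+b). -/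
private lemma hyp_h1 (m b : ℕ) (hb : b ≤ m) :
    ((m : ℚ) + b + 1) * (Nat.choose (2 * m + 1) (m - b) : ℚ) =
      (2 * (m : ℚ) + 1) * (Nat.choose (2 * m) (m - b) : ℚ) := by
  have e1 : Nat.choose (2 * m + 1) (m - b) = Nat.choose (2 * m + 1) (m + b + 1) := by
    rw [← Nat.choose_symm (show m + b + 1 ≤ 2 * m + 1 by omega)]
    congr 1; omega
  have e2 : Nat.choose (2 * m) (m + b) = Nat.choose (2 * m) (m - b) := by
    rw [← Nat.choose_symm (show m + b ≤ 2 * m by omega)]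
    congr 1; omega
  have h := Nat.add_one_mul_choose_eq (2 * m) (m + b)
  rw [e1, ← e2]
  have := congrArg (fun n : ℕ => (n : ℚ)) h
  push_cast at this ⊢
  linarith [this]

private lemma hyp_h2 (m b : ℕ) (hb : b < m) :
    ((m : ℚ) + b + 1) * (Nat.choose (2 * m) (m - b - 1) : ℚ) =
      ((m : ℚ) - b) * (Nat.choose (2 * m) (m - b) : ℚ) := by
  have e1 : Nat.choose (2 * m) (m + b + 1) = Nat.choose (2 * m) (m - b - 1) := by
    rw [← Nat.choose_symm (show m + b + 1 ≤ 2 * m by omega)]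
    congr 1; omega
  have e2 : Nat.choose (2 * m) (m + b) = Nat.choose (2 * m) (m - b) := by
    rw [← Nat.choose_symm (show m + b ≤ 2 * m by omega)]
    congr 1; omega
  have h := Nat.choose_succ_right_eq (2 * m) (m + b)
  rw [e1, e2, show 2 * m - (m + b) = m - b by omega] at h
  have := congrArg (fun n : ℕ => (n : ℚ)) h
  push_cast [Nat.cast_sub hb.le] at this
  linarith [this]

private lemma hyp_h3 (j b : ℕ) (hj : b + 2 ≤ j) :
    ((j : ℚ) + b + 1) * (Nat.choose (2 * j - 1) (j + b + 1) : ℚ) =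
      ((j : ℚ) - b - 1) * (Nat.choose (2 * j - 1) (j + b) : ℚ) := by
  have h := Nat.choose_succ_right_eq (2 * j - 1) (j + b)
  rw [show 2 * j - 1 - (j + b) = j - b - 1 by omega] at h
  have := congrArg (fun n : ℕ => (n : ℚ)) h
  push_cast [Nat.cast_sub (show b ≤ j by omega), Nat.cast_sub (show 1 ≤ j - b by omega)] at this
  linarith [this]

theorem hypergeometric_identity_two :
    ∀ m b j : ℕ, b ≤ m → b + 1 ≤ j →
      (∑ k ∈ Finset.Icc b m, matA m k * (Nat.choose (2 * j - 1) (j + k) : ℚ)) =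
        ((b : ℚ) + j) / ((m : ℚ) + j) * (Nat.choose (2 * m) (m - b) : ℚ) *
          (Nat.choose (2 * j - 1) (j + b) : ℚ) := by
  have main : ∀ d m b j : ℕ, m - b = d → b ≤ m → b + 1 ≤ j →
      (∑ k ∈ Finset.Icc b m, matA m k * (Nat.choose (2 * j - 1) (j + k) : ℚ)) =
        ((b : ℚ) + j) / ((m : ℚ) + j) * (Nat.choose (2 * m) (m - b) : ℚ) *
          (Nat.choose (2 * j - 1) (j + b) : ℚ) := by
    intro d
    induction d with
    | zero =>
      intro m b j hd hb hj
      have hbm : b = m := by omega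
      subst hbm
      have h1 : (2 * (b : ℚ) + 1) ≠ 0 := by positivity
      have hjq : (1 : ℚ) ≤ (j : ℚ) := by exact_mod_cast (show 1 ≤ j by omega)
      have h2 : ((b : ℚ) + j) ≠ 0 := by
        have := (Nat.cast_nonneg b : (0 : ℚ) ≤ b); linarith
      simp [matA, Nat.sub_self, div_self h1, div_self h2]
    | succ d ih =>
      intro m b j hd hb hj
      have hbm : b < m := by omega
      have hjq : (1 : ℚ) ≤ (j : ℚ) := by exact_mod_cast (show 1 ≤ j by omega)
      have hmj : ((m : ℚ) + j) ≠ 0 := by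
        have := (Nat.cast_nonneg m : (0 : ℚ) ≤ m); linarith
      have h2m : (2 * (m : ℚ) + 1) ≠ 0 := by positivity
      have hmb1 : ((m : ℚ) + b + 1) ≠ 0 := by positivity
      rw [← Finset.Ioc_insert_left hbm.le, Finset.sum_insert (by simp),
        ← Finset.Icc_add_one_left_eq_Ioc]
      rcases eq_or_lt_of_le hj with hj1 | hj2
      · -- j = b + 1 case
        subst hj1
        have hz : ∑ k ∈ Finset.Icc (b + 1) m,
            matA m k * (Nat.choose (2 * (b + 1) - 1) ((b + 1) + k) : ℚ) = 0 := by
          apply Finset.sum_eq_zero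
          intro k hk
          simp only [Finset.mem_Icc, Nat.succ_eq_add_one] at hk
          rw [Nat.choose_eq_zero_of_lt (by omega)]
          simp
        rw [hz, show 2 * (b + 1) - 1 = 2 * b + 1 by omega,
          show (b + 1) + b = 2 * b + 1 by omega, Nat.choose_self]
        have h1 := hyp_h1 m b hbm.le
        simp only [matA]
        push_cast
        field_simp
        linear_combination (2 * (b : ℚ) + 1) * h1
      · -- j ≥ b + 2 case
        have hIH := ih m (b + 1) j (by omega) (by omega) (by omega)
        rw [hIH, show m - (b + 1) = m - b - 1 by omega,
          show j + (b + 1) = j + b + 1 by omega]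
        have hjb1 : ((j : ℚ) + b + 1) ≠ 0 := by positivity
        have h1 := hyp_h1 m b hbm.le
        have h2 := hyp_h2 m b hbm
        have h3 := hyp_h3 j b (by omega)
        have e1 : (Nat.choose (2 * m + 1) (m - b) : ℚ) =
            (2 * (m : ℚ) + 1) * (Nat.choose (2 * m) (m - b) : ℚ) / ((m : ℚ) + b + 1) := by
          rw [eq_div_iff hmb1]; linear_combination h1
        have e2 : (Nat.choose (2 * m) (m - b - 1) : ℚ) =
            ((m : ℚ) - b) * (Nat.choose (2 * m) (m - b) : ℚ) / ((m : ℚ) + b + 1) := by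
          rw [eq_div_iff hmb1]; linear_combination h2
        have e3 : (Nat.choose (2 * j - 1) (j + b + 1) : ℚ) =
            ((j : ℚ) - b - 1) * (Nat.choose (2 * j - 1) (j + b) : ℚ) / ((j : ℚ) + b + 1) := by
          rw [eq_div_iff hjb1]; linear_combination h3
        simp only [matA]
        rw [e1, e2, e3]
        push_cast
        field_simp
        ring
  intro m b j hb hj
  exact main (m - b) m b j rfl hb hj
end

section
/- For every integer b ≥ 1 and every rational (or real) r, the following polynomial identity holds: (1/b) ∑_{p=1}^{b} C(b,p) C(b,p-1) (1-r)^p = ∑_{ℓ=0}^{b} (-1)^{b-ℓ} C(b+ℓ, 2ℓ) Cat(ℓ) r^{b-ℓ}, where Cat(ℓ) = C(2ℓ,ℓ)/(ℓ+1) is the ℓ-th Catalan number. (This shows that the two algebraic equations for the generating series R^{(d)} of d-irreducible bipartite slices, obtained respectively by the substitution approach and by the slice decomposition, coincide.) -/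
/-- The `ℓ`-th Catalan number as a rational: `C(2ℓ,ℓ)/(ℓ+1)`. -/
def catQ (ℓ : ℕ) : ℚ := (Nat.choose (2 * ℓ) ℓ : ℚ) / (ℓ + 1)

open Finset Nat in
private lemma sum_nat_key (b m : ℕ) (hb : 1 ≤ b) (hm : m ≤ b) :
    ∑ p ∈ Icc 1 b, Nat.choose b p * Nat.choose b (p-1) * Nat.choose p m
      = Nat.choose b m * Nat.choose (2*b - m) (b+1-m) := by
  have h2b : 2*b - m = (b - m) + b := by omega
  rw [h2b, Nat.add_choose_eq, Finset.Nat.sum_antidiagonal_eq_sum_range_succ_mk]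
  rw [Finset.sum_range_succ]
  have hz : (b - m).choose (b+1-m) = 0 := Nat.choose_eq_zero_of_lt (by omega)
  rw [hz, zero_mul, add_zero]
  rcases Nat.eq_zero_or_pos m with hm0 | hm1
  · subst hm0
    simp only [Nat.choose_zero_right, one_mul, Nat.sub_zero]
    rw [Finset.sum_range_succ']
    have : b.choose (b+1-0) = 0 := Nat.choose_eq_zero_of_lt (by omega)
    rw [this]
    simp only [Nat.choose_zero_right, mul_zero, one_mul, add_zero, Nat.mul_zero]
    rw [← Finset.Ico_add_one_right_eq_Icc, Finset.sum_Ico_eq_sum_range]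
    apply Finset.sum_congr rfl
    intro i hi
    simp only [Finset.mem_range] at hi
    have h1 : (1 + i) - 1 = i := by omega
    have h2 : b + 1 - (i + 1) = b - i := by omega
    rw [h1, h2, Nat.choose_symm (by omega : i ≤ b), Nat.add_comm 1 i, Nat.mul_one]
  · have hsub : Icc m b ⊆ Icc 1 b := Finset.Icc_subset_Icc (by omega) le_rfl
    rw [← Finset.sum_subset hsub (by
      intro p hp hnp
      simp only [Finset.mem_Icc] at hp hnp
      have : p < m := by omega
      rw [Nat.choose_eq_zero_of_lt this, mul_zero])]
    rw [← Finset.Ico_add_one_right_eq_Icc, Finset.sum_Ico_eq_sum_range, Finset.mul_sum]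
    apply Finset.sum_congr rfl
    intro q hq
    simp only [Finset.mem_range] at hq
    have htri : Nat.choose b (m+q) * Nat.choose (m+q) m
        = Nat.choose b m * Nat.choose (b - m) q := by
      have := Nat.choose_mul (n := b) (show m ≤ m + q by omega)
      simpa [Nat.add_sub_cancel_left] using this
    have hsym : Nat.choose b (m + q - 1) = Nat.choose b (b + 1 - m - q) := by
      have h1 : b + 1 - m - q = b - (m + q - 1) := by omega
      rw [h1, Nat.choose_symm (by omega : m + q - 1 ≤ b)]
    calc Nat.choose b (m+q) * Nat.choose b (m+q-1) * Nat.choose (m+q) m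
        = (Nat.choose b (m+q) * Nat.choose (m+q) m) * Nat.choose b (m+q-1) := by ring
      _ = Nat.choose b m * Nat.choose (b-m) q * Nat.choose b (b+1-m-q) := by
          rw [htri, hsym]
      _ = Nat.choose b m * ((b-m).choose q * b.choose (b+1-m-q)) := by ring

open Nat in
private lemma factQ_key (m ℓ k : ℕ) (hk : m + ℓ = k + 1) :
    ((m+ℓ).choose m : ℚ) * ((m+2*ℓ).choose (ℓ+1) : ℚ)
      = (m+ℓ) * ((Nat.choose (2*ℓ) ℓ : ℚ)/(ℓ+1)) * ((m+2*ℓ).choose (2*ℓ) : ℚ) := by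
  have c1 : ((m+ℓ).choose m : ℚ) = ((m+ℓ)! : ℚ) / ((m ! : ℚ) * (ℓ ! : ℚ)) := by
    rw [Nat.cast_choose ℚ (by omega : m ≤ m + ℓ), show m + ℓ - m = ℓ from by omega]
  have c2 : ((m+2*ℓ).choose (ℓ+1) : ℚ) = ((m+2*ℓ)! : ℚ) / (((ℓ+1)! : ℚ) * (k ! : ℚ)) := by
    rw [Nat.cast_choose ℚ (by omega : ℓ+1 ≤ m + 2*ℓ), show m + 2*ℓ - (ℓ+1) = k from by omega]
  have c3 : ((2*ℓ).choose ℓ : ℚ) = ((2*ℓ)! : ℚ) / ((ℓ ! : ℚ) * (ℓ ! : ℚ)) := by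
    rw [Nat.cast_choose ℚ (by omega : ℓ ≤ 2*ℓ), show 2*ℓ - ℓ = ℓ from by omega]
  have c4 : ((m+2*ℓ).choose (2*ℓ) : ℚ) = ((m+2*ℓ)! : ℚ) / (((2*ℓ)! : ℚ) * m !) := by
    rw [Nat.cast_choose ℚ (by omega : 2*ℓ ≤ m + 2*ℓ), show m + 2*ℓ - 2*ℓ = m from by omega]
  have hml : (m + ℓ)! = (m+ℓ) * k ! := by
    rw [hk, Nat.factorial_succ]
  have hl1 : (ℓ+1)! = (ℓ+1) * ℓ ! := Nat.factorial_succ ℓ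
  rw [c1, c2, c3, c4, hml, hl1]
  have f1 : (m ! : ℚ) ≠ 0 := by positivity
  have f2 : (ℓ ! : ℚ) ≠ 0 := by positivity
  have f3 : (k ! : ℚ) ≠ 0 := by positivity
  have f4 : (((2*ℓ)! : ℚ) : ℚ) ≠ 0 := by positivity
  have f5 : ((ℓ:ℚ)+1) ≠ 0 := by positivity
  push_cast
  field_simp

open Finset in
private lemma keyQ (b m : ℕ) (hb : 1 ≤ b) (hm : m ≤ b) :
    ∑ p ∈ Icc 1 b, (Nat.choose b p : ℚ) * (Nat.choose b (p-1) : ℚ) * (Nat.choose p m : ℚ)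
      = (b : ℚ) * catQ (b - m) * (Nat.choose (b + (b - m)) (2 * (b - m)) : ℚ) := by
  have hnat := sum_nat_key b m hb hm
  have hc : (∑ p ∈ Icc 1 b, (Nat.choose b p : ℚ) * (Nat.choose b (p-1) : ℚ) * (Nat.choose p m : ℚ))
      = ((Nat.choose b m * Nat.choose (2*b - m) (b+1-m) : ℕ) : ℚ) := by
    rw [← hnat]
    push_cast
    rfl
  rw [hc]
  obtain ⟨ℓ, hℓ⟩ : ∃ ℓ, b = m + ℓ := ⟨b - m, by omega⟩
  obtain ⟨k, hk⟩ : ∃ k, m + ℓ = k + 1 := ⟨m + ℓ - 1, by omega⟩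
  have e1 : 2*b - m = m + 2*ℓ := by omega
  have e2 : b + 1 - m = ℓ + 1 := by omega
  have e3 : b - m = ℓ := by omega
  have e4 : b + (b - m) = m + 2*ℓ := by omega
  have e5 : 2 * (b - m) = 2 * ℓ := by omega
  rw [e1, e2, e4, e5, e3, hℓ]
  push_cast
  rw [catQ]
  have := factQ_key m ℓ k hk
  push_cast at this ⊢
  linarith [this]

theorem substitution_eq_slice_equation :
    ∀ b : ℕ, 1 ≤ b → ∀ r : ℚ,
      (1 / (b : ℚ)) *
          ∑ p ∈ Finset.Icc 1 b,
            (Nat.choose b p : ℚ) * (Nat.choose b (p - 1) : ℚ) * (1 - r) ^ p =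
        ∑ ℓ ∈ Finset.range (b + 1),
          (-1 : ℚ) ^ (b - ℓ) * (Nat.choose (b + ℓ) (2 * ℓ) : ℚ) * catQ ℓ *
            r ^ (b - ℓ) := by
  intro b hb r
  have hb0 : (b : ℚ) ≠ 0 := by positivity
  -- Step 1: binomial expansion of (1-r)^p
  have expand : ∀ p ∈ Finset.Icc 1 b,
      (Nat.choose b p : ℚ) * (Nat.choose b (p-1) : ℚ) * (1 - r) ^ p
        = ∑ m ∈ Finset.range (b+1),
            (Nat.choose b p : ℚ) * (Nat.choose b (p-1) : ℚ) * (Nat.choose p m : ℚ) * (-r) ^ m := by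
    intro p hp
    simp only [Finset.mem_Icc] at hp
    have hpow : (1 - r) ^ p = ∑ m ∈ Finset.range (b+1), (Nat.choose p m : ℚ) * (-r) ^ m := by
      have h1 : (1 - r) ^ p = (-r + 1) ^ p := by ring_nf
      rw [h1, add_pow]
      simp only [one_pow, mul_one]
      rw [← Finset.sum_subset (Finset.range_subset_range.2 (by omega : p + 1 ≤ b + 1))]
      · apply Finset.sum_congr rfl
        intro m _
        ring
      · intro m _ hm
        simp only [Finset.mem_range, not_lt] at hm
        rw [Nat.choose_eq_zero_of_lt (by omega : p < m)]
        simp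
    rw [hpow, Finset.mul_sum]
    apply Finset.sum_congr rfl
    intro m _
    ring
  rw [Finset.sum_congr rfl expand, Finset.sum_comm]
  -- Step 2: apply keyQ to each inner sum
  have step2 : ∀ m ∈ Finset.range (b+1),
      (∑ p ∈ Finset.Icc 1 b,
        (Nat.choose b p : ℚ) * (Nat.choose b (p-1) : ℚ) * (Nat.choose p m : ℚ) * (-r) ^ m)
      = (-r) ^ m * ((b : ℚ) * catQ (b - m) * (Nat.choose (b + (b - m)) (2 * (b - m)) : ℚ)) := by
    intro m hm
    simp only [Finset.mem_range] at hm
    rw [← keyQ b m hb (by omega)]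
    rw [← Finset.sum_mul, mul_comm]
  rw [Finset.sum_congr rfl step2]
  -- Step 3: reflect the RHS sum
  rw [← Finset.sum_range_reflect
    (fun ℓ => (-1 : ℚ) ^ (b - ℓ) * (Nat.choose (b + ℓ) (2 * ℓ) : ℚ) * catQ ℓ * r ^ (b - ℓ)) (b+1)]
  rw [Finset.mul_sum]
  apply Finset.sum_congr rfl
  intro m hm
  simp only [Finset.mem_range] at hm
  have e1 : b + 1 - 1 - m = b - m := by omega
  have e2 : b - (b - m) = m := by omega
  rw [e1, e2]
  have : (-r) ^ m = (-1 : ℚ) ^ m * r ^ m := by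
    rw [neg_pow]
  rw [this]
  field_simp
end

section
/- Let K be a field and y ∈ K with y ≠ 0 and y^i ≠ 1 for all integers i ≥ 1. Let R ∈ K satisfy y + 1/y = 1/(R-1) (in particular R ≠ 1), and set z = 3R - R^2 - 2. Define, for each integer i ≥ 0, R_i = R·(1-y^i)(1-y^{i+3}) / ((1-y^{i+1})(1-y^{i+2})). Then for all i ≥ 0: z + R_i·R_{i+2} - (R_i + R_{i+1} + R_{i+2}) + 2 = 0. (Explicit solution of the integrable recurrence for distance-dependent generating functions of irreducible quadrangular dissections.) -/
/-- `R_i = R (1-y^i)(1-y^{i+3}) / ((1-y^{i+1})(1-y^{i+2}))`. -/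
noncomputable def Rseq {K : Type*} [Field K] (R y : K) (i : ℕ) : K :=
  R * (1 - y ^ i) * (1 - y ^ (i + 3)) / ((1 - y ^ (i + 1)) * (1 - y ^ (i + 2)))

set_option maxHeartbeats 4000000 in
theorem aux_quad {K : Type*} [Field K] (y a : K)
    (hy2 : (1:K) + y ^ 2 ≠ 0)
    (h1 : (1:K) - a * y ≠ 0) (h2 : (1:K) - a * y ^ 2 ≠ 0)
    (h3 : (1:K) - a * y ^ 3 ≠ 0) (h4 : (1:K) - a * y ^ 4 ≠ 0) :
    (3 * ((1 + y + y ^ 2) / (1 + y ^ 2)) - ((1 + y + y ^ 2) / (1 + y ^ 2)) ^ 2 - 2) +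
      (((1 + y + y ^ 2) / (1 + y ^ 2)) * (1 - a) * (1 - a * y ^ 3) / ((1 - a * y) * (1 - a * y ^ 2))) *
      (((1 + y + y ^ 2) / (1 + y ^ 2)) * (1 - a * y ^ 2) * (1 - a * y ^ 5) / ((1 - a * y ^ 3) * (1 - a * y ^ 4))) -
      (((1 + y + y ^ 2) / (1 + y ^ 2)) * (1 - a) * (1 - a * y ^ 3) / ((1 - a * y) * (1 - a * y ^ 2)) +
       ((1 + y + y ^ 2) / (1 + y ^ 2)) * (1 - a * y) * (1 - a * y ^ 4) / ((1 - a * y ^ 2) * (1 - a * y ^ 3)) +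
       ((1 + y + y ^ 2) / (1 + y ^ 2)) * (1 - a * y ^ 2) * (1 - a * y ^ 5) / ((1 - a * y ^ 3) * (1 - a * y ^ 4))) + 2 = 0 := by
  have hD1 : (1 + y ^ 2) * (1 + y ^ 2) ^ 2 *
      ((1 + y ^ 2) * ((1 - a * y) * (1 - a * y ^ 2)) * ((1 + y ^ 2) * ((1 - a * y ^ 3) * (1 - a * y ^ 4)))) ≠ 0 :=
    mul_ne_zero (mul_ne_zero hy2 (pow_ne_zero 2 hy2))
      (mul_ne_zero (mul_ne_zero hy2 (mul_ne_zero h1 h2)) (mul_ne_zero hy2 (mul_ne_zero h3 h4)))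
  have hD2 : (1 + y ^ 2) * ((1 - a * y) * (1 - a * y ^ 2)) * ((1 + y ^ 2) * ((1 - a * y ^ 2) * (1 - a * y ^ 3))) *
      ((1 + y ^ 2) * ((1 - a * y ^ 3) * (1 - a * y ^ 4))) ≠ 0 :=
    mul_ne_zero (mul_ne_zero (mul_ne_zero hy2 (mul_ne_zero h1 h2)) (mul_ne_zero hy2 (mul_ne_zero h2 h3)))
      (mul_ne_zero hy2 (mul_ne_zero h3 h4))
  have h1' : (1:K) - y * a ≠ 0 := by rwa [mul_comm]
  have h2' : (1:K) - y ^ 2 * a ≠ 0 := by rwa [mul_comm]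
  have h3' : (1:K) - y ^ 3 * a ≠ 0 := by rwa [mul_comm]
  have h4' : (1:K) - y ^ 4 * a ≠ 0 := by rwa [mul_comm]
  field_simp
  ring

set_option maxHeartbeats 4000000 in
theorem integrable_recurrence_irreducible_quadrangular {K : Type*} [Field K]
    (y R : K) (hy0 : y ≠ 0) (hy : ∀ i : ℕ, 1 ≤ i → y ^ i ≠ 1)
    (hR1 : R ≠ 1) (hR : y + 1 / y = 1 / (R - 1)) :
    ∀ i : ℕ,
      (3 * R - R ^ 2 - 2) + Rseq R y i * Rseq R y (i + 2) -
        (Rseq R y i + Rseq R y (i + 1) + Rseq R y (i + 2)) + 2 = 0 := by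
  intro i
  have hR1' : R - 1 ≠ 0 := sub_ne_zero.mpr hR1
  have hy2 : (1 : K) + y ^ 2 ≠ 0 := by
    intro h
    have : y + 1 / y = 0 := by field_simp; linear_combination h
    rw [this] at hR
    exact one_ne_zero ((div_eq_zero_iff.mp hR.symm).resolve_right hR1')
  have hRdef : R = (1 + y + y ^ 2) / (1 + y ^ 2) := by
    have h := hR
    field_simp at h ⊢
    linear_combination h
  have h1 : (1 : K) - y ^ i * y ≠ 0 := by
    rw [← pow_succ]; exact sub_ne_zero.mpr fun h => hy (i+1) (by omega) h.symm
  have h2 : (1 : K) - y ^ i * y ^ 2 ≠ 0 := by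
    rw [← pow_add]; exact sub_ne_zero.mpr fun h => hy (i+2) (by omega) h.symm
  have h3 : (1 : K) - y ^ i * y ^ 3 ≠ 0 := by
    rw [← pow_add]; exact sub_ne_zero.mpr fun h => hy (i+3) (by omega) h.symm
  have h4 : (1 : K) - y ^ i * y ^ 4 ≠ 0 := by
    rw [← pow_add]; exact sub_ne_zero.mpr fun h => hy (i+4) (by omega) h.symm
  have key := aux_quad y (y ^ i) hy2 h1 h2 h3 h4
  simp only [Rseq, show i+1+1=i+2 from rfl, show i+1+2=i+3 from rfl, show i+1+3=i+4 from rfl,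
    show i+2+1=i+3 from rfl, show i+2+2=i+4 from rfl, show i+2+3=i+5 from rfl,
    pow_add, pow_one, hRdef]
  exact key
end

section
/- Let K be a field and y ∈ K with y ≠ 0, y + 1/y ≠ 1, and y^i ≠ 1 for all integers i ≥ 1. Set T = (y + 1/y)/(y + 1/y - 1) and z = 1/(T·(y + 1/y)) (so that T = 1 + z·T^2 and y + 1/y = 1/(zT)). Define, for each integer i ≥ 0, T_i = T·(1-y^i)(1-y^{i+5}) / ((1-y^{i+2})(1-y^{i+3})). Then T_0 = 0 and for all i ≥ 1: T_i = 1 + z·T_{i-1}·T_{i+1}. (Explicit solution of the integrable recurrence for naturally embedded binary trees; Proposition 25 of Bousquet-Mélou.) -/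
set_option maxHeartbeats 1000000


/-- `T_i = T (1-y^i)(1-y^{i+5}) / ((1-y^{i+2})(1-y^{i+3}))` where
`T = (y+1/y)/(y+1/y-1)`. -/
noncomputable def Tseq {K : Type*} [Field K] (y : K) (i : ℕ) : K :=
  ((y + 1 / y) / (y + 1 / y - 1)) * (1 - y ^ i) * (1 - y ^ (i + 5)) /
    ((1 - y ^ (i + 2)) * (1 - y ^ (i + 3)))

theorem integrable_recurrence_naturally_embedded_binary_trees {K : Type*} [Field K]
    (y : K) (hy0 : y ≠ 0) (hy1 : y + 1 / y ≠ 1) (hy : ∀ i : ℕ, 1 ≤ i → y ^ i ≠ 1) :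
    Tseq y 0 = 0 ∧
      ∀ i : ℕ, 1 ≤ i →
        Tseq y i =
          1 + (1 / (((y + 1 / y) / (y + 1 / y - 1)) * (y + 1 / y))) *
              Tseq y (i - 1) * Tseq y (i + 1) := by
  have hk : ∀ k : ℕ, 1 ≤ k → (1 : K) - y ^ k ≠ 0 := fun k h =>
    sub_ne_zero.mpr fun e => hy k h e.symm
  have hden : y + 1 / y - 1 ≠ 0 := sub_ne_zero.mpr hy1
  have hsum : y + 1 / y ≠ 0 := by
    intro h
    have h2 : y ^ 2 = -1 := by field_simp at h; linear_combination h
    have h4 : y ^ 4 = 1 := by rw [show (4:ℕ) = 2*2 by rfl, pow_mul, h2]; ring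
    exact hy 4 (by norm_num) h4
  have hq : y ^ 2 - y + 1 ≠ 0 := by
    intro h; apply hden; field_simp; linear_combination h
  have hp : y ^ 2 + 1 ≠ 0 := by
    intro h; apply hsum; field_simp; linear_combination h
  have hq' : 1 - y + y ^ 2 ≠ 0 := fun h => hq (by linear_combination h)
  have hyy : y + 1 / y = (y ^ 2 + 1) / y := by
    rw [eq_div_iff hy0]; field_simp
  have hyd : y + 1 / y - 1 = (y ^ 2 - y + 1) / y := by
    rw [hyy, eq_div_iff hy0, sub_mul, div_mul_cancel₀ _ hy0]; ring
  have hTfrac : (y + 1 / y) / (y + 1 / y - 1) = (y ^ 2 + 1) / (y ^ 2 - y + 1) := by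
    rw [hyd, hyy, div_div_div_cancel_right₀]; exact hy0
  -- clean form of Tseq
  have hT : ∀ i : ℕ, Tseq y i =
      (y ^ 2 + 1) * ((1 - y ^ i) * (1 - y ^ (i + 5))) /
        ((y ^ 2 - y + 1) * ((1 - y ^ (i + 2)) * (1 - y ^ (i + 3)))) := by
    intro i
    unfold Tseq
    rw [hTfrac, div_eq_div_iff (by
        exact mul_ne_zero (hk (i+2) (by omega)) (hk (i+3) (by omega)))
      (mul_ne_zero hq (mul_ne_zero (hk (i+2) (by omega)) (hk (i+3) (by omega)))),
      div_mul_eq_mul_div, div_mul_eq_mul_div, div_mul_eq_mul_div,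
      div_eq_iff hq]
    ring
  -- clean form of z
  have hz : 1 / (((y + 1 / y) / (y + 1 / y - 1)) * (y + 1 / y)) =
      y * (y ^ 2 - y + 1) / ((y ^ 2 + 1) ^ 2) := by
    rw [hTfrac, hyy, div_mul_div_comm, one_div_div,
      div_eq_div_iff (mul_ne_zero hp hp) (pow_ne_zero 2 hp)]
    ring
  constructor
  · simp [Tseq]
  · intro i hi
    obtain ⟨j, rfl⟩ : ∃ j, i = j + 1 := ⟨i - 1, (Nat.succ_pred_eq_of_pos hi).symm⟩
    rw [Nat.add_sub_cancel, hT, hT, hT, hz]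
    have h1 := hk (j + 1) (by omega)
    have h2 := hk (j + 2) (by omega)
    have h3 := hk (j + 3) (by omega)
    have h4 := hk (j + 4) (by omega)
    have h5 := hk (j + 5) (by omega)
    have h6 := hk (j + 6) (by omega)
    have h7 := hk (j + 7) (by omega)
    have hrw : ∀ k : ℕ, y ^ (j + k) = y ^ j * y ^ k := fun k => pow_add y j k
    simp only [show j+1+1+5 = j+7 by ring, show j+1+1+2 = j+4 by ring,
      show j+1+1+3 = j+5 by ring, show j+1+1 = j+2 by ring,
      show j+1+5 = j+6 by ring, show j+1+2 = j+3 by ring,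
      show j+1+3 = j+4 by ring]
    rw [hrw 1, hrw 2, hrw 3, hrw 4, hrw 5, hrw 6, hrw 7] at *
    generalize y ^ j = u at *
    rw [div_mul_div_comm, div_mul_div_comm, one_add_div (by
      exact mul_ne_zero (mul_ne_zero (pow_ne_zero 2 hp)
        (mul_ne_zero hq (mul_ne_zero h2 h3)))
        (mul_ne_zero hq (mul_ne_zero h4 h5)))]
    rw [div_eq_div_iff
      (mul_ne_zero hq (mul_ne_zero h3 h4))
      (mul_ne_zero (mul_ne_zero (pow_ne_zero 2 hp)
        (mul_ne_zero hq (mul_ne_zero h2 h3)))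
        (mul_ne_zero hq (mul_ne_zero h4 h5)))]
    ring
end

section
/- Let K be a field and y ∈ K with y ≠ 0, y + 1/y + 1 ≠ 0, and y^i ≠ 1 for all integers i ≥ 1. Let s ∈ K satisfy y + 1/y + 1 = 1/s^2, and set z = s - s^3. Define, for each integer j ≥ 0, s_j = s·(1-y^j)(1-y^{j+3}) / ((1-y^{j+1})(1-y^{j+2})). Then s_0 = 0 and for all i ≥ 1: z + s_{i-1}·s_i·s_{i+1} - s_i = 0. (Explicit solution of the integrable recurrence for irreducible triangular slices / naturally embedded ternary trees.) -/
/-- `s_j = s (1-y^j)(1-y^{j+3}) / ((1-y^{j+1})(1-y^{j+2}))`. -/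
noncomputable def sseq {K : Type*} [Field K] (s y : K) (j : ℕ) : K :=
  s * (1 - y ^ j) * (1 - y ^ (j + 3)) / ((1 - y ^ (j + 1)) * (1 - y ^ (j + 2)))

theorem integrable_recurrence_irreducible_triangular_slices {K : Type*} [Field K]
    (y s : K) (hy0 : y ≠ 0) (hy1 : y + 1 / y + 1 ≠ 0)
    (hy : ∀ i : ℕ, 1 ≤ i → y ^ i ≠ 1)
    (hs : y + 1 / y + 1 = 1 / s ^ 2) :
    sseq s y 0 = 0 ∧
      ∀ i : ℕ, 1 ≤ i →
        (s - s ^ 3) + sseq s y (i - 1) * sseq s y i * sseq s y (i + 1) -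
          sseq s y i = 0 := by
  have hs0 : s ≠ 0 := by
    rintro rfl
    apply hy1
    rw [hs]; norm_num
  have hne : ∀ n : ℕ, 1 ≤ n → (1 - y ^ n) ≠ 0 := by
    intro n hn h
    exact hy n hn (by linear_combination -h)
  have hs' : s ^ 2 * (y ^ 2 + y + 1) = y := by
    field_simp at hs
    linear_combination hs
  constructor
  · simp [sseq]
  · rintro (_ | k) hi
    · omega
    · simp only [Nat.add_sub_cancel, sseq]
      have h1 := hne (k + 1) (by omega)
      have h2 := hne (k + 2) (by omega)
      have h3 := hne (k + 3) (by omega)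
      have h4 := hne (k + 4) (by omega)
      have h5 := hne (k + 1 + 3) (by omega)
      have h6 := hne (k + 1 + 1 + 3) (by omega)
      field_simp
      linear_combination (s * y^k * (y^2 - 1) * (1 - y)) * hs'
end

section
/- Fix integers m > b ≥ 1. Define the polynomials f(r) = C(2m, m-b) · ∑_{ℓ=0}^{b-1} (-1)^{b-ℓ-1} (b-ℓ)/(m-ℓ) · C(b+ℓ, 2ℓ) · Cat(ℓ) · r^{m-ℓ} and z(r) = -∑_{ℓ=0}^{b} (-1)^{b-ℓ} C(b+ℓ, 2ℓ) Cat(ℓ) r^{b-ℓ}, where Cat(ℓ) = C(2ℓ,ℓ)/(ℓ+1). Then f'(r) = C(2m, m-b) · r^{m-b} · z'(r) as polynomials in r. (General pointing formula for irreducible 2b-angular dissections of the 2m-gon.) -/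
open Polynomial

theorem general_pointing_formula_bipartite (m b : ℕ) (hb : 1 ≤ b) (hm : b < m) :
    derivative
        (C (Nat.choose (2 * m) (m - b) : ℚ) *
          ∑ ℓ ∈ Finset.range b,
            C ((-1 : ℚ) ^ (b - ℓ - 1) * ((b : ℚ) - ℓ) / ((m : ℚ) - ℓ) *
                (Nat.choose (b + ℓ) (2 * ℓ) : ℚ) * catQ ℓ) * X ^ (m - ℓ)) =
      C (Nat.choose (2 * m) (m - b) : ℚ) * X ^ (m - b) *
        derivative
          (-∑ ℓ ∈ Finset.range (b + 1),
            C ((-1 : ℚ) ^ (b - ℓ) * (Nat.choose (b + ℓ) (2 * ℓ) : ℚ) * catQ ℓ) *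
              X ^ (b - ℓ)) := by
  simp only [derivative_mul, derivative_C, zero_mul, zero_add, derivative_sum,
    derivative_neg, derivative_X_pow, Finset.sum_range_succ, Nat.sub_self,
    Nat.cast_zero, map_zero, mul_zero, zero_mul, add_zero, mul_neg, neg_neg,
    Finset.mul_sum, pow_zero, mul_one, derivative_add]
  rw [← Finset.sum_neg_distrib]
  refine Finset.sum_congr rfl fun ℓ hℓ => ?_
  have hℓb : ℓ < b := Finset.mem_range.mp hℓ
  have hℓm : ℓ < m := hℓb.trans hm
  have hx : (X : ℚ[X]) ^ (m - ℓ - 1) = X ^ (m - b) * X ^ (b - ℓ - 1) := by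
    rw [← pow_add]; congr 1; omega
  have hc : ((2 * m).choose (m - b) : ℚ) *
      ((-1) ^ (b - ℓ - 1) * ((b : ℚ) - ℓ) / ((m : ℚ) - ℓ) * ((b + ℓ).choose (2 * ℓ) : ℚ) * catQ ℓ) *
      ((m - ℓ : ℕ) : ℚ) =
      -(((2 * m).choose (m - b) : ℚ) *
        ((-1) ^ (b - ℓ) * ((b + ℓ).choose (2 * ℓ) : ℚ) * catQ ℓ) * ((b - ℓ : ℕ) : ℚ)) := by
    have h1 : ((m - ℓ : ℕ) : ℚ) = (m : ℚ) - ℓ := by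
      rw [Nat.cast_sub hℓm.le]
    have h2 : ((b - ℓ : ℕ) : ℚ) = (b : ℚ) - ℓ := by
      rw [Nat.cast_sub hℓb.le]
    have h3 : ((-1 : ℚ)) ^ (b - ℓ) = -(-1) ^ (b - ℓ - 1) := by
      obtain ⟨k, hk⟩ : ∃ k, b - ℓ = k + 1 := ⟨b - ℓ - 1, by omega⟩
      rw [hk, Nat.add_sub_cancel, pow_succ]; ring
    have hm0 : (m : ℚ) - ℓ ≠ 0 := by
      have : (ℓ : ℚ) < m := by exact_mod_cast hℓm
      linarith
    rw [h1, h2, h3]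
    field_simp
  have hC : (C (((2 * m).choose (m - b) : ℚ)) *
      C ((-1) ^ (b - ℓ - 1) * ((b : ℚ) - ℓ) / ((m : ℚ) - ℓ) * ((b + ℓ).choose (2 * ℓ) : ℚ) * catQ ℓ) *
      C (((m - ℓ : ℕ) : ℚ)) : ℚ[X]) =
      -(C (((2 * m).choose (m - b) : ℚ)) *
        C ((-1) ^ (b - ℓ) * ((b + ℓ).choose (2 * ℓ) : ℚ) * catQ ℓ) * C (((b - ℓ : ℕ) : ℚ))) := by
    rw [← C_mul, ← C_mul, ← C_mul, ← C_mul, ← C_neg]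
    exact congrArg C hc
  rw [hx]
  linear_combination (X ^ (m - b) * X ^ (b - ℓ - 1)) * hC
end

section
/- Let T ∈ ℚ[[z]] satisfy T = 1 + z·T^2, let r = 1 + z·T and f = 9r^2 - 4r^3 as formal power series in z. Then for every integer n ≥ 0, the coefficient of z^{n+2} in f equals (6/(n+2)) · Cat(n), where Cat(n) = C(2n,n)/(n+1). (The number of irreducible quadrangular dissections of the hexagon with n+2 inner faces.) -/
open PowerSeries Finset

lemma coeff_T_eq_catalan (T : PowerSeries ℚ) (hT : T = 1 + PowerSeries.X * T ^ 2) :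
    ∀ n : ℕ, PowerSeries.coeff n T = catalan n := by
  intro n
  induction n using Nat.strong_induction_on with
  | _ n ih =>
    match n with
    | 0 =>
      have := congrArg (PowerSeries.constantCoeff) hT
      simp at this
      simpa [PowerSeries.coeff_zero_eq_constantCoeff] using this
    | Nat.succ m =>
      rw [hT]
      rw [map_add, PowerSeries.coeff_one, sq, PowerSeries.coeff_succ_X_mul,
        PowerSeries.coeff_mul]
      have hsum : ∑ p ∈ antidiagonal m, PowerSeries.coeff p.1 T * PowerSeries.coeff p.2 T
          = ∑ p ∈ antidiagonal m, ((catalan p.1 * catalan p.2 : ℕ) : ℚ) := by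
        refine Finset.sum_congr rfl fun p hp => ?_
        rw [Finset.HasAntidiagonal.mem_antidiagonal] at hp
        rw [ih p.1 (by omega), ih p.2 (by omega)]
        push_cast; ring
      rw [hsum, ← Nat.cast_sum, ← catalan_succ']
      simp

lemma catalan_ratio (n : ℕ) :
    4 * ((catalan n : ℚ)) - (catalan (n + 1) : ℚ)
      = (6 / ((n : ℚ) + 2)) * (catalan n : ℚ) := by
  have h1 : ((n : ℚ) + 1) * (catalan n : ℚ) = (Nat.centralBinom n : ℚ) := by
    exact_mod_cast congrArg (Nat.cast : ℕ → ℚ) (succ_mul_catalan_eq_centralBinom n)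
  have h2 : ((n : ℚ) + 2) * (catalan (n + 1) : ℚ) = (Nat.centralBinom (n + 1) : ℚ) := by
    have := congrArg (Nat.cast : ℕ → ℚ) (succ_mul_catalan_eq_centralBinom (n + 1))
    push_cast at this; linarith
  have h3 : ((n : ℚ) + 1) * (Nat.centralBinom (n + 1) : ℚ)
      = 2 * (2 * n + 1) * (Nat.centralBinom n : ℚ) := by
    have := congrArg (Nat.cast : ℕ → ℚ) (Nat.succ_mul_centralBinom_succ n)
    push_cast at this; linarith
  have hn2 : ((n : ℚ) + 2) ≠ 0 := by positivity
  have hn1 : ((n : ℚ) + 1) ≠ 0 := by positivity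
  field_simp
  nlinarith [h1, h2, h3, sq_nonneg ((n:ℚ)+1)]

lemma catalan_cast_eq (n : ℕ) :
    (catalan n : ℚ) = (Nat.choose (2 * n) n : ℚ) / (n + 1) := by
  have h := congrArg (Nat.cast : ℕ → ℚ) (succ_mul_catalan_eq_centralBinom n)
  rw [Nat.centralBinom] at h
  push_cast at h
  have hn1 : ((n : ℚ) + 1) ≠ 0 := by positivity
  field_simp
  linarith

theorem count_irreducible_quadrangular_dissections_hexagon
    (T : PowerSeries ℚ) (hT : T = 1 + PowerSeries.X * T ^ 2) :
    ∀ n : ℕ,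
      PowerSeries.coeff (n + 2)
          (9 * (1 + PowerSeries.X * T) ^ 2 - 4 * (1 + PowerSeries.X * T) ^ 3) =
        (6 / ((n : ℚ) + 2)) * ((Nat.choose (2 * n) n : ℚ) / (n + 1)) := by
  intro n
  have key : 9 * (1 + PowerSeries.X * T) ^ 2 - 4 * (1 + PowerSeries.X * T) ^ 3
      = 5 + 7 * PowerSeries.X - PowerSeries.X * T
        + 4 * (PowerSeries.X * (PowerSeries.X * T)) := by
    linear_combination (7 * PowerSeries.X + 4 * PowerSeries.X ^ 2 * T) * hT
  rw [key]
  have e1 : PowerSeries.coeff (n + 2) (5 : PowerSeries ℚ) = 0 := by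
    rw [show (5 : PowerSeries ℚ) = PowerSeries.C (R := ℚ) 5 from (map_ofNat (PowerSeries.C (R := ℚ)) 5).symm]
    simp [PowerSeries.coeff_C]
  have e2 : PowerSeries.coeff (n + 2) (7 * PowerSeries.X : PowerSeries ℚ) = 0 := by
    rw [show (7 : PowerSeries ℚ) * PowerSeries.X = PowerSeries.C (R := ℚ) 7 * PowerSeries.X by rw [map_ofNat]]
    simp [PowerSeries.coeff_C_mul, PowerSeries.coeff_X]
  have e3 : PowerSeries.coeff (R := ℚ) (n + 2) (PowerSeries.X * T) = catalan (n + 1) := by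
    rw [show n + 2 = (n + 1) + 1 from rfl, PowerSeries.coeff_succ_X_mul,
      coeff_T_eq_catalan T hT]
  have e4 : PowerSeries.coeff (R := ℚ) (n + 2)
      (4 * (PowerSeries.X * (PowerSeries.X * T))) = 4 * catalan n := by
    rw [show (4 : PowerSeries ℚ) = PowerSeries.C (R := ℚ) 4 from (map_ofNat (PowerSeries.C (R := ℚ)) 4).symm,
      PowerSeries.coeff_C_mul, show n + 2 = (n + 1) + 1 from rfl,
      PowerSeries.coeff_succ_X_mul, PowerSeries.coeff_succ_X_mul,
      coeff_T_eq_catalan T hT]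
  rw [map_add, map_sub, map_add, e1, e2, e3, e4, ← catalan_cast_eq, ← catalan_ratio]
  ring
end

section
/- Let T ∈ ℚ[[z]] satisfy T = 1 + z^2·T^3, let s = z·T and f = 2 + 2s^2 - 3s^4 as formal power series in z. Then for every integer n ≥ 0, the coefficient of z^{2n+2} in f equals (2/(n+1)) · C(3n,n)/(2n+1). (Tutte's count of irreducible triangular dissections of the square with 2n+2 triangles.) -/
open Nat in
private lemma tutte_choose_id (n : ℕ) :
    (((3*n+3).choose (n+1) : ℚ)) * (2*(n+1)*(2*n+1)) =
    (((3*n).choose n : ℚ)) * (3*(3*n+1)*(3*n+2)) := by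
  rw [Nat.cast_choose ℚ (by omega : n+1 ≤ 3*n+3), Nat.cast_choose ℚ (by omega : n ≤ 3*n)]
  have e1 : 3*n+3-(n+1) = 2*n+2 := by omega
  have e2 : 3*n-n = 2*n := by omega
  rw [e1, e2]
  have f1 : (3*n+3)! = (3*n+3)*((3*n+2)*((3*n+1)*(3*n)!)) := by
    rw [show 3*n+3 = (3*n+2)+1 from rfl, Nat.factorial_succ,
        show 3*n+2 = (3*n+1)+1 from rfl, Nat.factorial_succ,
        show 3*n+1 = (3*n)+1 from rfl, Nat.factorial_succ]
  have f2 : (n+1)! = (n+1)*n ! := Nat.factorial_succ n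
  have f3 : (2*n+2)! = (2*n+2)*((2*n+1)*(2*n)!) := by
    rw [show 2*n+2 = (2*n+1)+1 from rfl, Nat.factorial_succ,
        show 2*n+1 = (2*n)+1 from rfl, Nat.factorial_succ]
  rw [f1, f2, f3]
  push_cast
  have h1 : ((3*n)! : ℚ) ≠ 0 := by positivity
  have h2 : ((n)! : ℚ) ≠ 0 := by positivity
  have h3 : ((2*n)! : ℚ) ≠ 0 := by positivity
  field_simp

theorem count_irreducible_triangular_dissections_square
    (T : PowerSeries ℚ) (hT : T = 1 + PowerSeries.X ^ 2 * T ^ 3) :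
    ∀ n : ℕ,
      PowerSeries.coeff (2 * n + 2)
          (2 + 2 * (PowerSeries.X * T) ^ 2 - 3 * (PowerSeries.X * T) ^ 4) =
        (2 / ((n : ℚ) + 1)) * ((Nat.choose (3 * n) n : ℚ) / (2 * n + 1)) := by
  open PowerSeries in
  intro n
  have e2 : (d⁄dX ℚ) (2:ℚ⟦X⟧) = 0 := by rw [← map_ofNat ((C (R := ℚ))) 2, derivative_C]
  have e3 : (d⁄dX ℚ) (3:ℚ⟦X⟧) = 0 := by rw [← map_ofNat ((C (R := ℚ))) 3, derivative_C]
  have hT0 : (X:ℚ⟦X⟧)^2*T^3 = T - 1 := by linear_combination -hT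
  -- first derivative relation
  have h1 : (d⁄dX ℚ) T * (1 - 3*X^2*T^2) = 2*X*T^3 := by
    have h := congrArg (d⁄dX ℚ) hT
    simp only [map_add, Derivation.leibniz, Derivation.leibniz_pow, derivative_X, smul_eq_mul,
      Derivation.map_one_eq_zero, mul_one, mul_zero, add_zero, nsmul_eq_mul] at h
    push_cast at h
    linear_combination h
  -- second derivative relation
  have h2 : (d⁄dX ℚ) ((d⁄dX ℚ) T) * (1 - 3*X^2*T^2)
      = 2*T^3 + 12*X*T^2*((d⁄dX ℚ) T) + 6*X^2*T*((d⁄dX ℚ) T)^2 := by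
    have h := congrArg (d⁄dX ℚ) h1
    simp only [map_add, map_sub, Derivation.leibniz, Derivation.leibniz_pow, derivative_X,
      smul_eq_mul, Derivation.map_one_eq_zero, mul_one, mul_zero, add_zero, zero_sub,
      nsmul_eq_mul, e2, e3] at h
    push_cast at h
    linear_combination h
  -- the hypergeometric ODE, multiplied by a unit cubed
  have hEu : ((4*X^2-27*X^4) * (d⁄dX ℚ) ((d⁄dX ℚ) T) + (8*X-81*X^3) * (d⁄dX ℚ) T - 24*X^2*T)
      * (1 - 3*X^2*T^2)^3 = 0 := by
    linear_combination ((4*X^2-27*X^4) * ((1 - 3*X^2*T^2)^2)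
        + (4*X^2-27*X^4) * (12*X*T^2*(1 - 3*X^2*T^2)
            + 6*X^2*T*((d⁄dX ℚ) T * (1 - 3*X^2*T^2) + 2*X*T^3)) * 0) * h2
      + ((8*X-81*X^3) * (1 - 3*X^2*T^2)^2
         + (4*X^2-27*X^4) * (12*X*T^2*(1 - 3*X^2*T^2)
            + 6*X^2*T*((d⁄dX ℚ) T * (1 - 3*X^2*T^2) + 2*X*T^3))) * h1
      + (- 24*X^2*T - 24*X^2*T^2 + 24*X^4*T^4) * hT0
  have hu : ((1:ℚ⟦X⟧) - 3*X^2*T^2)^3 ≠ 0 := by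
    intro h
    have := congrArg (constantCoeff (R := ℚ)) h
    simp [map_pow, map_sub, map_mul] at this
  have hE : ((4*X^2-27*X^4) * (d⁄dX ℚ) ((d⁄dX ℚ) T) + (8*X-81*X^3) * (d⁄dX ℚ) T - 24*X^2*T)
      = 0 := by
    rcases mul_eq_zero.mp hEu with h | h
    · exact h
    · exact absurd h hu
  -- coefficient recurrence
  have hrec : ∀ m : ℕ, 4*((m:ℚ)+2)*((m:ℚ)+3) * coeff (m+2) T
      = 3*(3*(m:ℚ)+2)*(3*(m:ℚ)+4) * coeff m T := by
    intro m
    have hE' : (X:ℚ⟦X⟧)^2*((C (R := ℚ)) 4 * (d⁄dX ℚ) ((d⁄dX ℚ) T)) + X^1*((C (R := ℚ)) 8 * (d⁄dX ℚ) T)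
        - X^4*((C (R := ℚ)) 27 * (d⁄dX ℚ) ((d⁄dX ℚ) T)) - X^3*((C (R := ℚ)) 81 * (d⁄dX ℚ) T)
        - X^2*((C (R := ℚ)) 24 * T) = 0 := by
      simp only [map_ofNat]; linear_combination hE
    have h := congrArg (coeff (m+2)) hE'
    simp only [map_sub, map_add, coeff_X_pow_mul', coeff_C_mul, coeff_derivative, map_zero] at h
    rcases m with _ | _ | m
    · norm_num at h ⊢; linarith [h]
    · norm_num at h ⊢; linarith [h]
    · have g2 : 2 ≤ m+2+2 := by omega
      have g1 : 1 ≤ m+2+2 := by omega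
      have g4 : 4 ≤ m+2+2 := by omega
      have g3 : 3 ≤ m+2+2 := by omega
      rw [if_pos g2, if_pos g1, if_pos g4, if_pos g3, if_pos g2] at h
      simp only [show m+2+2-2 = m+2 from rfl, show m+2+2-1 = m+3 from rfl,
        show m+2+2-4 = m from rfl, show m+2+2-3 = m+1 from rfl] at h
      push_cast at h ⊢
      linear_combination h
  -- initial coefficients
  have t0 : coeff 0 T = 1 := by
    have h := congrArg (coeff 0) hT
    simpa [coeff_X_pow_mul'] using h
  have t1 : coeff 1 T = 0 := by
    have h := congrArg (coeff 1) hT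
    simpa [coeff_X_pow_mul'] using h
  -- even coefficients
  have heven : ∀ k : ℕ, coeff (2*k) T = ((3*k).choose k : ℚ) / (2*k+1) := by
    intro k
    induction k with
    | zero => simpa using t0
    | succ k ih =>
      have h := hrec (2*k)
      rw [show 2*k+2 = 2*(k+1) from by ring] at h
      rw [ih] at h
      have hne : (4*((2*k:ℚ)+2)*((2*k:ℚ)+3)) ≠ 0 := by positivity
      have key := tutte_choose_id k
      have h21 : ((2*k:ℚ)+1) ≠ 0 := by positivity
      have h23 : ((2*k:ℚ)+3) ≠ 0 := by positivity
      have hval : coeff (2*(k+1)) T = ((3*(k+1)).choose (k+1) : ℚ) / (2*(k+1)+1) := by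
        have expand : ((3*(k+1)).choose (k+1) : ℚ) = ((3*k+3).choose (k+1) : ℚ) := by
          norm_num; ring_nf
        rw [expand]
        field_simp at h key ⊢
        -- (casts already normalized)
        push_cast at h
        have hz : ((8:ℚ)*(k+1)*(2*k+1)) * (coeff (2*(k+1)) T * (2*(k+1)+1) - ((3*k+3).choose (k+1) : ℚ)) = 0 := by
          linear_combination h - 4*key
        have hnz : ((8:ℚ)*(k+1)*(2*k+1)) ≠ 0 := by positivity
        linear_combination (mul_eq_zero.mp hz).resolve_left hnz
      rw [hval]; push_cast; ring_nf
  -- assemble: derivative of f is 4 X T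
  have hds1 : ((1:ℚ⟦X⟧) - 3*(X*T)^2) * (T + X * (d⁄dX ℚ) T) = 1 := by
    linear_combination X*h1 - hT0
  have hdf : (d⁄dX ℚ) (2 + 2*(X*T)^2 - 3*(X*T)^4) = 4*(X*T) := by
    simp only [map_add, map_sub, Derivation.leibniz, Derivation.leibniz_pow, derivative_X,
      smul_eq_mul, Derivation.map_one_eq_zero, mul_one, mul_zero, add_zero, zero_sub,
      nsmul_eq_mul, e2, e3]
    push_cast
    linear_combination (4*(X*T))*hds1
  -- extract the coefficient
  have hc := congrArg (coeff (2*n+1)) hdf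
  rw [coeff_derivative] at hc
  have hXT : coeff (2*n+1) (4*(X*T)) = 4 * coeff (2*n) T := by
    rw [show (4*(X*T) : ℚ⟦X⟧) = X^1*((C (R := ℚ)) 4 * T) from by simp only [map_ofNat]; ring,
      coeff_X_pow_mul', if_pos (by omega : 1 ≤ 2*n+1)]
    simp [coeff_C_mul]
  rw [hXT, heven n] at hc
  have hne : ((2*n:ℚ)+1+1) ≠ 0 := by positivity
  have h21 : ((2*n:ℚ)+1) ≠ 0 := by positivity
  have hn1 : ((n:ℚ)+1) ≠ 0 := by positivity
  have : coeff (2*n+1+1) (2 + 2*(X*T)^2 - 3*(X*T)^4)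
      = 4 * (((3*n).choose n : ℚ) / (2*n+1)) / ((2*n:ℚ)+1+1) := by
    field_simp at hc ⊢
    -- (casts already normalized)
    push_cast at hc
    linarith [hc]
  rw [show 2*n+2 = 2*n+1+1 from rfl]
  rw [this]
  field_simp
  ring
end

section
/- Let R be a commutative ring, let v₋₁, v₀ ∈ R, and let (v_k)_{k≥1} be a sequence in R satisfying, for all k ≥ -1, the recursion v_k = ∑_{m=1}^{k+1} v_m · v_{k-m} + v_{k+2}. Let V(t) = ∑_{k≥1} v_k t^k ∈ R[[t]]. Then the formal power series identity (1 - V(t)) · (t·v₋₁ + t^2·(v₀ + V(t))) = V(t) holds in R[[t]]. (Generating function form of the recursive slice decomposition equations.) -/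
open PowerSeries Finset

lemma icc_cast' {R : Type*} [CommRing R] (g : ℤ → R) (a b : ℕ) :
    ∑ m ∈ Finset.Icc (a:ℤ) (b:ℤ), g m = ∑ m ∈ Finset.Icc a b, g (m : ℤ) := by
  have : Finset.Icc (a:ℤ) (b:ℤ) = (Finset.Icc a b).image (Nat.cast) := by
    ext x
    simp only [Finset.mem_Icc, Finset.mem_image]
    constructor
    · rintro ⟨h1, h2⟩
      exact ⟨x.toNat, by omega, by omega⟩
    · rintro ⟨m, ⟨h1, h2⟩, rfl⟩
      exact ⟨by exact_mod_cast h1, by exact_mod_cast h2⟩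
  rw [this, Finset.sum_image (by intros p _ q _ h; exact_mod_cast h)]

theorem slice_decomposition_generating_function_identity
    {R : Type*} [CommRing R] (v : ℤ → R)
    (hrec : ∀ k : ℤ, -1 ≤ k →
      v k = (∑ m ∈ Finset.Icc (1 : ℤ) (k + 1), v m * v (k - m)) + v (k + 2)) :
    (1 - PowerSeries.mk fun n : ℕ => if n = 0 then 0 else v (n : ℤ)) *
        (PowerSeries.C (R := R) (v (-1)) * PowerSeries.X +
          (PowerSeries.C (R := R) (v 0) +
              PowerSeries.mk fun n : ℕ => if n = 0 then 0 else v (n : ℤ)) *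
            PowerSeries.X ^ 2) =
      PowerSeries.mk fun n : ℕ => if n = 0 then 0 else v (n : ℤ) := by
  set f : ℕ → R := fun n => if n = 0 then 0 else v (n : ℤ) with hf
  set V : PowerSeries R := PowerSeries.mk f with hV
  set w : ℕ → R := fun n => if n = 0 then 0 else v ((n : ℤ) - 2) with hw
  have hW : PowerSeries.C (R := R) (v (-1)) * PowerSeries.X + (PowerSeries.C (R := R) (v 0) + V) * PowerSeries.X ^ 2
      = PowerSeries.mk w := by
    ext n
    simp only [map_add, PowerSeries.coeff_mul_X_pow', PowerSeries.coeff_mk, hw,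
      PowerSeries.coeff_C_mul, PowerSeries.coeff_X, PowerSeries.coeff_C, hV, hf]
    rcases n with _ | _ | n
    · norm_num
    · norm_num
    · have h1 : ¬ (n + 2 = 1) := by omega
      have h2 : (2:ℕ) ≤ n + 2 := by omega
      have h3 : n + 2 - 2 = n := by omega
      have h4 : n + 2 ≠ 0 := by omega
      have h5 : ((n:ℤ) + 2) - 2 = n := by ring
      simp only [show n+1+1 = n+2 from rfl, h1, if_false, mul_zero, zero_add, h2, if_true, h3, h4]
      push_cast
      rw [h5]
      rcases Nat.eq_zero_or_pos n with rfl | hn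
      · norm_num
      · have h6 : n ≠ 0 := by omega
        simp [h6]
  rw [hW, sub_mul, one_mul]
  ext n
  rw [map_sub, PowerSeries.coeff_mk, PowerSeries.coeff_mk, PowerSeries.coeff_mul]
  simp only [hV, PowerSeries.coeff_mk]
  rw [Finset.Nat.sum_antidiagonal_eq_sum_range_succ (fun i j => f i * w j)]
  rcases n with _ | _ | n
  · simp [hw, hf]
  · -- n = 1
    have h := hrec (-1) le_rfl
    norm_num at h
    rw [Finset.sum_range_succ, Finset.sum_range_one]
    simp only [hw, hf]
    norm_num
    exact h
  · -- n + 2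
    have hk := hrec n (by omega)
    have hcast : ((n:ℤ) + 1) = ((n+1 : ℕ) : ℤ) := by push_cast; ring
    have hsub : Finset.Icc 1 (n+1) ⊆ Finset.range (n + 3) := by
      intro i hi
      simp only [Finset.mem_Icc] at hi
      simp only [Finset.mem_range]
      omega
    have hzero : ∀ i ∈ Finset.range (n+3), i ∉ Finset.Icc 1 (n+1) →
        f i * w (n + 2 - i) = 0 := by
      intro i hi hni
      simp only [Finset.mem_range] at hi
      simp only [Finset.mem_Icc, not_and_or, not_le] at hni
      rcases hni with h | h
      · have : i = 0 := by omega
        simp [hf, this]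
      · have : n + 2 - i = 0 := by omega
        simp [hw, this]
    have hsum : ∑ i ∈ Finset.range (n + 3), f i * w (n + 2 - i)
        = ∑ m ∈ Finset.Icc (1 : ℤ) ((n:ℤ) + 1), v m * v ((n:ℤ) - m) := by
      rw [hcast, show (1:ℤ) = ((1:ℕ):ℤ) from rfl, icc_cast',
        ← Finset.sum_subset hsub hzero]
      apply Finset.sum_congr rfl
      intro i hi
      simp only [Finset.mem_Icc] at hi
      have h6 : i ≠ 0 := by omega
      have h7 : n + 2 - i ≠ 0 := by omega
      have h8 : ((n + 2 - i : ℕ) : ℤ) - 2 = (n:ℤ) - i := by omega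
      simp [hf, hw, h6, h7, h8]
    simp only [show n+1+1 = n+2 from rfl, Nat.succ_eq_add_one,
      show n+2+1 = n+3 from rfl]
    rw [hsum]
    have h9 : (((n+2:ℕ)):ℤ) - 2 = (n:ℤ) := by push_cast; ring
    have h10 : (n:ℤ) + 2 = ((n+2:ℕ):ℤ) := by push_cast; ring
    simp only [hw, hf, show (n+2 ≠ 0) from by omega, if_false, h9]
    rw [h10] at hk
    linear_combination hk
end
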